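/- arXiv:1610.01227 — 5 statements merged into one kernel-verified Lean document; each statement's English description precedes it below -/
import Mathlib

section
/- For all positive reals x and y, (min(x,y)) · (log(x/y))² ≤ 4e⁻² · (x + y). -/
lemma aux_log_le_div_exp (s : ℝ) (hs : 0 < s) : Real.log s ≤ s / Real.exp 1 := by
  have h := Real.log_le_sub_one_of_pos (show 0 < s / Real.exp 1 by positivity)
  rw [Real.log_div (ne_of_gt hs) (Real.exp_ne_zero 1), Real.log_exp] at h
  linarith

/-- For all positive reals `x` and `y`, `(min x y) * (log (x/y))^2 ≤ 4 e⁻² (x + y)`. -/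
theorem min_mul_sq_log_div_le (x y : ℝ) (hx : 0 < x) (hy : 0 < y) :
    min x y * (Real.log (x / y)) ^ 2 ≤ 4 * Real.exp (-2) * (x + y) := by
  wlog h : y ≤ x with H
  · push_neg at h
    have := H y x hy hx h.le
    rw [min_comm, add_comm, ← neg_sq, ← Real.log_inv, inv_div]
    exact this
  · have hlt : 0 < x / y := by positivity
    have ht : 1 ≤ x / y := (one_le_div hy).2 h
    have hsp : 0 < Real.sqrt (x / y) := Real.sqrt_pos.2 hlt
    have h1 : Real.log (Real.sqrt (x / y)) ≤ Real.sqrt (x / y) / Real.exp 1 :=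
      aux_log_le_div_exp _ hsp
    have h2 : Real.sqrt (x / y) ^ 2 = x / y := Real.sq_sqrt hlt.le
    have hs : Real.log (Real.sqrt (x / y)) = Real.log (x / y) / 2 :=
      Real.log_sqrt hlt.le
    have h3 : 0 ≤ Real.log (Real.sqrt (x / y)) :=
      Real.log_nonneg (Real.one_le_sqrt.mpr ht)
    have he : Real.exp (-2) * (Real.exp 1 * Real.exp 1) = 1 := by
      rw [← Real.exp_add, ← Real.exp_add]; norm_num
    have hepos : 0 < Real.exp 1 := Real.exp_pos 1
    rw [min_eq_right h]
    have hsq : Real.log (x / y) ^ 2 ≤ 4 * (x / y) / (Real.exp 1 * Real.exp 1) := by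
      rw [le_div_iff₀ (by positivity)]
      have h1' : Real.log (Real.sqrt (x / y)) * Real.exp 1 ≤ Real.sqrt (x / y) :=
        (le_div_iff₀ hepos).mp h1
      have hs2 : Real.log (Real.sqrt (x / y)) ^ 2 = Real.log (x / y) ^ 2 / 4 := by
        rw [hs]; ring
      nlinarith [mul_le_mul h1' h1' (mul_nonneg h3 hepos.le) hsp.le, h2, hs2]
    have := mul_le_mul_of_nonneg_left hsq hy.le
    have hx' : y * (4 * (x / y) / (Real.exp 1 * Real.exp 1)) = 4 * Real.exp (-2) * x := by
      field_simp
      linear_combination (-1) * he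
    nlinarith [Real.exp_pos (-2)]
end

section
/- Let h₁, …, hₙ : ℝ → ℝ be Borel measurable, and let φ₁, …, φₙ : ℝ → ℝ be concave functions satisfying φₙ ≥ hₙ pointwise and φₖ(y) ≥ hₖ(y) + φₖ₊₁(y) for all y ∈ ℝ and k ∈ {1,…,n−1}. Then for every martingale (X₀, X₁, …, Xₙ) with X₀ = x₀ a.s. (with all relevant expectations finite), E[∑ₖ₌₁ⁿ hₖ(Xₖ)] ≤ φ₁(x₀). -/
open MeasureTheory


/-- Conditional Jensen step, proved via disintegration of the joint law of `(U, V)`. -/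
lemma jensen_aux {Ω : Type*} {m0 : MeasurableSpace Ω} (μ : Measure Ω) [IsProbabilityMeasure μ]
    (U V : Ω → ℝ) (hU : Measurable U) (hV : Measurable V)
    (hUi : Integrable U μ) (hVi : Integrable V μ)
    (hmart : ∀ A : Set ℝ, MeasurableSet A →
      ∫ ω in U ⁻¹' A, V ω ∂μ = ∫ ω in U ⁻¹' A, U ω ∂μ)
    (ψ g : ℝ → ℝ) (hψ : ConcaveOn ℝ Set.univ ψ)
    (hg : Measurable g) (hψg : ∀ x, ψ x ≤ g x)
    (hψV : Integrable (fun ω => ψ (V ω)) μ)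
    (hgU : Integrable (fun ω => g (U ω)) μ) :
    ∫ ω, ψ (V ω) ∂μ ≤ ∫ ω, g (U ω) ∂μ := by
  have hψc : Continuous ψ := hψ.locallyLipschitz.continuous
  have hUV : Measurable fun ω => (U ω, V ω) := hU.prodMk hV
  set ρ : Measure (ℝ × ℝ) := μ.map (fun ω => (U ω, V ω)) with hρ
  have : IsProbabilityMeasure ρ := Measure.isProbabilityMeasure_map hUV.aemeasurable
  have hfst : ρ.fst = μ.map U := Measure.fst_map_prodMk hV
  -- integrability of various functions w.r.t. ρ
  have hsnd_int : Integrable (fun p : ℝ × ℝ => p.2) ρ := by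
    rw [hρ]
    exact (integrable_map_measure measurable_snd.aestronglyMeasurable hUV.aemeasurable).mpr hVi
  have hψsnd_int : Integrable (fun p : ℝ × ℝ => ψ p.2) ρ := by
    rw [hρ]
    exact (integrable_map_measure (hψc.measurable.comp measurable_snd).aestronglyMeasurable
      hUV.aemeasurable).mpr hψV
  have hid_int : Integrable (fun x : ℝ => x) ρ.fst := by
    rw [hfst]
    exact (integrable_map_measure measurable_id.aestronglyMeasurable hU.aemeasurable).mpr hUi
  have hg_int : Integrable g ρ.fst := by
    rw [hfst]
    exact (integrable_map_measure hg.aestronglyMeasurable hU.aemeasurable).mpr hgU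
  -- barycenter property: for a.e. x, the conditional law given x has mean x
  have hbary : (fun x => ∫ y, y ∂ρ.condKernel x) =ᵐ[ρ.fst] (fun x => x) := by
    refine ae_eq_of_forall_setIntegral_eq_of_sigmaFinite
      (fun s _ _ => hsnd_int.integral_condKernel.integrableOn)
      (fun s _ _ => hid_int.integrableOn) ?_
    intro s hs _
    have h1 : ∫ x in s, ∫ y, y ∂ρ.condKernel x ∂ρ.fst
        = ∫ p in s ×ˢ Set.univ, p.2 ∂ρ :=
      Measure.setIntegral_condKernel_univ_right hs hsnd_int.integrableOn
    have hset : (fun ω => (U ω, V ω)) ⁻¹' (s ×ˢ Set.univ) = U ⁻¹' s := by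
      ext ω; simp
    have h2 : ∫ p in s ×ˢ Set.univ, (p.2 : ℝ) ∂ρ = ∫ ω in U ⁻¹' s, V ω ∂μ := by
      rw [hρ, setIntegral_map (hs.prod MeasurableSet.univ)
        measurable_snd.aestronglyMeasurable hUV.aemeasurable, hset]
    have h3 : ∫ x in s, (x : ℝ) ∂ρ.fst = ∫ ω in U ⁻¹' s, U ω ∂μ := by
      rw [hfst]
      exact setIntegral_map hs measurable_id.aestronglyMeasurable hU.aemeasurable
    rw [h1, h2, hmart s hs, h3]
  -- a.e. integrability of y and ψ y under the conditional kernels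
  have hae1 : ∀ᵐ x ∂ρ.fst, Integrable (fun y : ℝ => y) (ρ.condKernel x) :=
    hsnd_int.condKernel_ae
  have hae2 : ∀ᵐ x ∂ρ.fst, Integrable (fun y : ℝ => ψ y) (ρ.condKernel x) :=
    hψsnd_int.condKernel_ae
  -- a.e. Jensen inequality
  have hjensen : ∀ᵐ x ∂ρ.fst, ∫ y, ψ y ∂ρ.condKernel x ≤ g x := by
    filter_upwards [hbary, hae1, hae2] with x hbx h1x h2x
    haveI : IsProbabilityMeasure (ρ.condKernel x) :=
      ProbabilityTheory.IsMarkovKernel.isProbabilityMeasure x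
    have := hψ.le_map_integral (hψc.continuousOn) isClosed_univ
      (Filter.Eventually.of_forall fun _ => Set.mem_univ _) h1x
      (by exact h2x)
    calc ∫ y, ψ y ∂ρ.condKernel x ≤ ψ (∫ y, y ∂ρ.condKernel x) := this
      _ = ψ x := by rw [hbx]
      _ ≤ g x := hψg x
  -- put everything together
  have e1 : ∫ ω, ψ (V ω) ∂μ = ∫ p, ψ p.2 ∂ρ := by
    rw [hρ]
    exact (integral_map hUV.aemeasurable
      (hψc.measurable.comp measurable_snd).aestronglyMeasurable).symm
  have e2 : ∫ p, ψ p.2 ∂ρ = ∫ x, ∫ y, ψ y ∂ρ.condKernel x ∂ρ.fst :=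
    (Measure.integral_condKernel hψsnd_int).symm
  have e3 : ∫ ω, g (U ω) ∂μ = ∫ x, g x ∂ρ.fst := by
    rw [hfst]
    exact (integral_map hU.aemeasurable hg.aestronglyMeasurable).symm
  rw [e1, e2, e3]
  exact integral_mono_ae hψsnd_int.integral_condKernel hg_int hjensen

/-- Weak duality (`d = 0` case): if `φ₁, …, φₙ` are concave with `φₙ ≥ hₙ` and
`φₖ ≥ hₖ + φₖ₊₁` pointwise, then for every martingale `(Xₖ)` with `X₀ = x₀` a.s. we have
`E[∑_{k=1}^n hₖ(Xₖ)] ≤ φ₁(x₀)`. -/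
theorem weak_duality_iterated_concave
    {Ω : Type*} {m0 : MeasurableSpace Ω} (μ : Measure Ω) [IsProbabilityMeasure μ]
    (ℱ : Filtration ℕ m0) (X : ℕ → Ω → ℝ) (hX : Martingale X ℱ μ)
    (x₀ : ℝ) (hstart : ∀ᵐ ω ∂μ, X 0 ω = x₀)
    (n : ℕ) (hn : 1 ≤ n) (h φ : ℕ → ℝ → ℝ)
    (hmeas : ∀ k, 1 ≤ k → k ≤ n → Measurable (h k))
    (hconc : ∀ k, 1 ≤ k → k ≤ n → ConcaveOn ℝ Set.univ (φ k))
    (hlast : ∀ y, h n y ≤ φ n y)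
    (hstep : ∀ k, 1 ≤ k → k < n → ∀ y, h k y + φ (k + 1) y ≤ φ k y)
    (hinth : ∀ k, 1 ≤ k → k ≤ n → Integrable (fun ω => h k (X k ω)) μ)
    (hintφ : ∀ k, 1 ≤ k → k ≤ n → Integrable (fun ω => φ k (X k ω)) μ) :
    ∫ ω, ∑ k ∈ Finset.Icc 1 n, h k (X k ω) ∂μ ≤ φ 1 x₀ := by
  classical
  have hXm : ∀ k, Measurable (X k) := fun k => ((hX.stronglyAdapted k).mono (ℱ.le k)).measurable
  have hmart : ∀ k, ∀ A : Set ℝ, MeasurableSet A →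
      ∫ ω in X k ⁻¹' A, X (k+1) ω ∂μ = ∫ ω in X k ⁻¹' A, X k ω ∂μ := by
    intro k A hA
    have hs : MeasurableSet[ℱ k] (X k ⁻¹' A) := (hX.stronglyAdapted k).measurable hA
    exact (hX.setIntegral_eq (Nat.le_succ k) hs).symm
  have hcont : ∀ k, 1 ≤ k → k ≤ n → Continuous (φ k) := fun k h1 h2 =>
    (hconc k h1 h2).locallyLipschitz.continuous
  -- backwards induction
  have key : ∀ j k, 1 ≤ k → k + j = n →
      ∫ ω, ∑ i ∈ Finset.Icc k n, h i (X i ω) ∂μ ≤ ∫ ω, φ k (X k ω) ∂μ := by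
    intro j
    induction j with
    | zero =>
      intro k hk1 hkn
      have hk : k = n := by omega
      subst hk
      simp only [Finset.Icc_self, Finset.sum_singleton]
      exact integral_mono (hinth k hk1 le_rfl) (hintφ k hk1 le_rfl)
        (fun ω => hlast (X k ω))
    | succ j ih =>
      intro k hk1 hkn
      have hklt : k < n := by omega
      have hkn' : k ≤ n := le_of_lt hklt
      have hicc : Finset.Icc k n = insert k (Finset.Icc (k+1) n) := by
        ext i
        simp only [Finset.mem_Icc, Finset.mem_insert]
        omega
      have hknot : k ∉ Finset.Icc (k+1) n := by
        simp [Finset.mem_Icc]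
      have hint_sum : Integrable (fun ω => ∑ i ∈ Finset.Icc (k+1) n, h i (X i ω)) μ := by
        apply integrable_finset_sum
        intro i hi
        rw [Finset.mem_Icc] at hi
        exact hinth i (by omega) hi.2
      have hsum_split : ∫ ω, ∑ i ∈ Finset.Icc k n, h i (X i ω) ∂μ
          = ∫ ω, h k (X k ω) ∂μ + ∫ ω, ∑ i ∈ Finset.Icc (k+1) n, h i (X i ω) ∂μ := by
        rw [← integral_add (hinth k hk1 hkn') hint_sum]
        apply integral_congr_ae
        filter_upwards with ω
        rw [hicc, Finset.sum_insert hknot]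
      have hih := ih (k+1) (by omega) (by omega)
      -- conditional Jensen step
      have hjen : ∫ ω, φ (k+1) (X (k+1) ω) ∂μ
          ≤ ∫ ω, (φ k (X k ω) - h k (X k ω)) ∂μ := by
        have := jensen_aux μ (X k) (X (k+1)) (hXm k) (hXm (k+1))
          (hX.integrable k) (hX.integrable (k+1)) (hmart k)
          (φ (k+1)) (fun x => φ k x - h k x)
          (hconc (k+1) (by omega) (by omega))
          ((hcont k hk1 hkn').measurable.sub (hmeas k hk1 hkn'))
          (fun x => by show φ (k+1) x ≤ φ k x - h k x; linarith [hstep k hk1 hklt x])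
          (hintφ (k+1) (by omega) (by omega))
          ((hintφ k hk1 hkn').sub (hinth k hk1 hkn'))
        exact this
      rw [hsum_split]
      calc ∫ ω, h k (X k ω) ∂μ + ∫ ω, ∑ i ∈ Finset.Icc (k+1) n, h i (X i ω) ∂μ
          ≤ ∫ ω, h k (X k ω) ∂μ + ∫ ω, φ (k+1) (X (k+1) ω) ∂μ := by linarith
        _ ≤ ∫ ω, h k (X k ω) ∂μ + ∫ ω, (φ k (X k ω) - h k (X k ω)) ∂μ := by linarith
        _ = ∫ ω, φ k (X k ω) ∂μ := by
            rw [integral_sub (hintφ k hk1 hkn') (hinth k hk1 hkn')]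
            ring
  have hmain := key (n - 1) 1 le_rfl (by omega)
  -- final unconditional Jensen
  have hmean : ∫ ω, X 1 ω ∂μ = x₀ := by
    have h0 : ∫ ω, X 0 ω ∂μ = ∫ ω, X 1 ω ∂μ := by
      have := hX.setIntegral_eq (show (0:ℕ) ≤ 1 by norm_num) (MeasurableSet.univ (α := Ω))
      simpa using this
    rw [← h0]
    rw [integral_congr_ae (g := fun _ => x₀) hstart]
    simp
  have hjen1 : ∫ ω, φ 1 (X 1 ω) ∂μ ≤ φ 1 (∫ ω, X 1 ω ∂μ) := by
    refine (hconc 1 le_rfl hn).le_map_integral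
      ((hcont 1 le_rfl hn).continuousOn) isClosed_univ
      (Filter.Eventually.of_forall fun _ => Set.mem_univ _)
      (hX.integrable 1) ?_
    exact hintφ 1 le_rfl hn
  rw [hmean] at hjen1
  exact le_trans hmain (le_trans hjen1 (le_refl _))
end

section
/- Let h : ℝ → ℝ be bounded above by an affine function and let ĥ be its concave envelope. For any x₀ ∈ ℝ and ε > 0 there exists a probability measure ℚ on ℝ supported on at most two points with barycenter x₀ (i.e., ∫ y dℚ(y) = x₀) such that ∫ h dℚ ≥ ĥ(x₀) − ε. -/
open MeasureTheory

/-- The concave envelope of `h`: the pointwise infimum of all concave functions dominating `h`. -/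
noncomputable def concaveEnvelope (h : ℝ → ℝ) : ℝ → ℝ := fun x =>
  sInf {v : ℝ | ∃ g : ℝ → ℝ, ConcaveOn ℝ Set.univ g ∧ (∀ z, h z ≤ g z) ∧ g x = v}

/-- For `h` bounded above by an affine function, the concave envelope value at `x₀` is
`ε`-attained by integrating `h` against a probability measure supported on at most two points
with barycenter `x₀`. -/
theorem concaveEnvelope_approx_two_point_measure (h : ℝ → ℝ) (α β : ℝ)
    (hb : ∀ x, h x ≤ α + β * x) (x₀ : ℝ) (ε : ℝ) (hε : 0 < ε) :
    ∃ Q : Measure ℝ, IsProbabilityMeasure Q ∧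
      (∃ s : Finset ℝ, s.card ≤ 2 ∧ Q ((↑s : Set ℝ)ᶜ) = 0) ∧
      (∫ y, y ∂Q) = x₀ ∧
      concaveEnvelope h x₀ - ε ≤ ∫ y, h y ∂Q := by
  classical
  set T : Set ℝ := {y | ∃ p z₁ z₂ : ℝ, 0 ≤ p ∧ p ≤ 1 ∧
      p * z₁ + (1 - p) * z₂ = x₀ ∧ y = p * h z₁ + (1 - p) * h z₂} with hTdef
  have hne : T.Nonempty := ⟨h x₀, 1, x₀, x₀, by norm_num⟩
  have hbdd : BddAbove T := by
    refine ⟨α + β * x₀, ?_⟩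
    rintro y ⟨p, z₁, z₂, hp0, hp1, hbar, rfl⟩
    have h1 := hb z₁
    have h2 := hb z₂
    have hb2 : β * (p * z₁ + (1 - p) * z₂) = β * x₀ := by rw [hbar]
    nlinarith [mul_le_mul_of_nonneg_left h1 hp0,
      mul_le_mul_of_nonneg_left h2 (by linarith : (0:ℝ) ≤ 1 - p), hb2]
  set M := sSup T with hMdef
  have hMem : ∀ {y : ℝ}, y ∈ T → y ≤ M := fun hy => le_csSup hbdd hy
  -- chord inequality
  have chord : ∀ z₁ z₂ : ℝ, z₁ < x₀ → x₀ < z₂ →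
      (h z₂ - M) / (z₂ - x₀) ≤ (M - h z₁) / (x₀ - z₁) := by
    intro z₁ z₂ h1 h2
    have hd1 : (0:ℝ) < x₀ - z₁ := by linarith
    have hd2 : (0:ℝ) < z₂ - x₀ := by linarith
    have hd : (0:ℝ) < z₂ - z₁ := by linarith
    set p : ℝ := (z₂ - x₀) / (z₂ - z₁) with hpdef
    have hp0 : 0 ≤ p := le_of_lt (div_pos hd2 hd)
    have hp1 : p ≤ 1 := by
      rw [hpdef, div_le_one hd]; linarith
    have hbar : p * z₁ + (1 - p) * z₂ = x₀ := by
      rw [hpdef]; field_simp; ring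
    have hmem : p * h z₁ + (1 - p) * h z₂ ∈ T := ⟨p, z₁, z₂, hp0, hp1, hbar, rfl⟩
    have hle : p * h z₁ + (1 - p) * h z₂ ≤ M := hMem hmem
    rw [div_le_div_iff₀ hd2 hd1]
    have key : (z₂ - x₀) * h z₁ + (x₀ - z₁) * h z₂ ≤ (z₂ - z₁) * M := by
      have hmul := mul_le_mul_of_nonneg_left hle (le_of_lt hd)
      have e1 : (z₂ - z₁) * (p * h z₁ + (1 - p) * h z₂)
          = (z₂ - x₀) * h z₁ + (x₀ - z₁) * h z₂ := by
        rw [hpdef]; field_simp; ring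
      linarith [e1 ▸ hmul]
    nlinarith
  -- slope
  set Sl : Set ℝ := {w | ∃ z : ℝ, x₀ < z ∧ w = (h z - M) / (z - x₀)} with hSldef
  have hSlne : Sl.Nonempty := ⟨(h (x₀ + 1) - M) / (x₀ + 1 - x₀), x₀ + 1, by linarith, rfl⟩
  have hSlbdd : BddAbove Sl := by
    refine ⟨(M - h (x₀ - 1)) / (x₀ - (x₀ - 1)), ?_⟩
    rintro w ⟨z, hz, rfl⟩
    exact chord (x₀ - 1) z (by linarith) hz
  set β' := sSup Sl with hβdef
  have haff : ∀ z, h z ≤ (M - β' * x₀) + β' * z := by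
    intro z
    rcases lt_trichotomy z x₀ with hlt | heq | hgt
    · have hβle : β' ≤ (M - h z) / (x₀ - z) := by
        apply csSup_le hSlne
        rintro w ⟨z₂, hz₂, rfl⟩
        exact chord z z₂ hlt hz₂
      have hd : (0:ℝ) < x₀ - z := by linarith
      have := (le_div_iff₀ hd).mp hβle
      nlinarith
    · subst heq
      have : h z ≤ M := hMem ⟨1, z, z, by norm_num⟩
      nlinarith
    · have hβge : (h z - M) / (z - x₀) ≤ β' := le_csSup hSlbdd ⟨z, hgt, rfl⟩
      have hd : (0:ℝ) < z - x₀ := by linarith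
      have := (div_le_iff₀ hd).mp hβge
      nlinarith
  have hg : ConcaveOn ℝ Set.univ (fun z => (M - β' * x₀) + β' * z) := by
    constructor
    · exact convex_univ
    · intro x _ y _ a b ha hb' hab
      simp only [smul_eq_mul]
      have : a * ((M - β' * x₀) + β' * x) + b * ((M - β' * x₀) + β' * y)
          = (M - β' * x₀) + β' * (a * x + b * y) := by linear_combination (M - β' * x₀) * hab
      linarith
  have hS_bdd : BddBelow {v : ℝ | ∃ g : ℝ → ℝ, ConcaveOn ℝ Set.univ g ∧ (∀ z, h z ≤ g z) ∧ g x₀ = v} := by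
    refine ⟨h x₀, ?_⟩
    rintro v ⟨g, _, hdom, rfl⟩
    exact hdom x₀
  have henv : concaveEnvelope h x₀ ≤ M := by
    have hmem : M ∈ {v : ℝ | ∃ g : ℝ → ℝ, ConcaveOn ℝ Set.univ g ∧ (∀ z, h z ≤ g z) ∧ g x₀ = v} :=
      ⟨fun z => (M - β' * x₀) + β' * z, hg, haff, by ring⟩
    exact csInf_le hS_bdd hmem
  obtain ⟨y, hyT, hy⟩ := exists_lt_of_lt_csSup hne (show M - ε < M by linarith)
  obtain ⟨p, z₁, z₂, hp0, hp1, hbar, rfl⟩ := hyT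
  have hq0 : (0:ℝ) ≤ 1 - p := by linarith
  set Q : Measure ℝ := ENNReal.ofReal p • Measure.dirac z₁
      + ENNReal.ofReal (1 - p) • Measure.dirac z₂ with hQdef
  have hint : ∀ f : ℝ → ℝ, ∫ y, f y ∂Q = p * f z₁ + (1 - p) * f z₂ := by
    intro f
    have hint1 : ∀ (z : ℝ), Integrable f (Measure.dirac z) := by
      intro z
      exact (integrable_const (f z)).congr (ae_eq_dirac f).symm
    have hI1 : Integrable f (ENNReal.ofReal p • Measure.dirac z₁) :=
      (hint1 z₁).smul_measure ENNReal.ofReal_ne_top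
    have hI2 : Integrable f (ENNReal.ofReal (1 - p) • Measure.dirac z₂) :=
      (hint1 z₂).smul_measure ENNReal.ofReal_ne_top
    rw [hQdef, integral_add_measure hI1 hI2, integral_smul_measure, integral_smul_measure,
      integral_dirac, integral_dirac, ENNReal.toReal_ofReal hp0, ENNReal.toReal_ofReal hq0,
      smul_eq_mul, smul_eq_mul]
  have hprob : IsProbabilityMeasure Q := by
    constructor
    rw [hQdef]
    simp only [Measure.add_apply, Measure.smul_apply, smul_eq_mul,
      Measure.dirac_apply_of_mem (Set.mem_univ z₁), Measure.dirac_apply_of_mem (Set.mem_univ z₂),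
      mul_one]
    rw [← ENNReal.ofReal_add hp0 hq0]
    norm_num
  refine ⟨Q, hprob, ⟨{z₁, z₂}, ?_, ?_⟩, ?_, ?_⟩
  · exact le_trans (Finset.card_insert_le _ _) (by simp)
  · rw [hQdef]
    have hms : MeasurableSet ((↑({z₁, z₂} : Finset ℝ) : Set ℝ)ᶜ) :=
      (Finset.measurableSet _).compl
    have h1 : Measure.dirac z₁ ((↑({z₁, z₂} : Finset ℝ) : Set ℝ)ᶜ) = 0 := by
      rw [Measure.dirac_apply' _ hms]
      simp [Set.indicator_apply]
    have h2 : Measure.dirac z₂ ((↑({z₁, z₂} : Finset ℝ) : Set ℝ)ᶜ) = 0 := by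
      rw [Measure.dirac_apply' _ hms]
      simp [Set.indicator_apply]
    simp [Measure.add_apply, Measure.smul_apply, h1, h2]
  · have := hint id
    simpa using this.trans (by simpa using hbar)
  · have := hint h
    rw [this]
    linarith
end

section
/- Define functions recursively: φₙ★ is the concave envelope of hₙ, and for k = n−1, …, 1, φₖ★ is the concave envelope of hₖ + φₖ₊₁★, where each hₖ : ℝ → ℝ is continuous and bounded above by an affine function. Then for every x₀ ∈ ℝ and ε > 0 there exists a martingale (X₀,…,Xₙ) with X₀ = x₀ a.s., each Xₖ taking at most 2ᵏ values, such that φ₁★(x₀) ≤ E[∑ₖ₌₁ⁿ hₖ(Xₖ)] + n·ε. -/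
open MeasureTheory

/-- A martingale `(Xₖ)` on some probability space with `X₀ = x₀` almost surely. -/
structure MartingaleStartingAt (x₀ : ℝ) where
  Ω : Type
  m0 : MeasurableSpace Ω
  μ : @Measure Ω m0
  prob : @IsProbabilityMeasure Ω m0 μ
  F : @Filtration Ω ℕ _ m0
  X : ℕ → Ω → ℝ
  mart : @Martingale Ω ℝ ℕ _ m0 _ _ X F μ
  start : ∀ᵐ ω ∂μ, X 0 ω = x₀



lemma affine_concave (A B : ℝ) : ConcaveOn ℝ Set.univ (fun x => A + B * x) := by
  refine ⟨convex_univ, ?_⟩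
  intro x _ y _ a b ha hb hab
  simp only [smul_eq_mul]
  have hb' : b = 1 - a := by linarith
  subst hb'
  exact le_of_eq (by ring)

section env
variable {g : ℝ → ℝ} {A B : ℝ}

lemma env_bddBelow (g : ℝ → ℝ) (x : ℝ) :
    BddBelow {v : ℝ | ∃ g' : ℝ → ℝ, ConcaveOn ℝ Set.univ g' ∧ (∀ z, g z ≤ g' z) ∧ g' x = v} := by
  refine ⟨g x, ?_⟩
  rintro v ⟨g', _, hd, rfl⟩
  exact hd x

lemma env_nonempty (hg : ∀ z, g z ≤ A + B * z) (x : ℝ) :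
    Set.Nonempty {v : ℝ | ∃ g' : ℝ → ℝ, ConcaveOn ℝ Set.univ g' ∧ (∀ z, g z ≤ g' z) ∧ g' x = v} :=
  ⟨A + B * x, fun z => A + B * z, affine_concave A B, hg, rfl⟩

lemma env_le (hg : ∀ z, g z ≤ A + B * z) {g' : ℝ → ℝ} (hc : ConcaveOn ℝ Set.univ g')
    (hd : ∀ z, g z ≤ g' z) (x : ℝ) : concaveEnvelope g x ≤ g' x :=
  csInf_le (env_bddBelow g x) ⟨g', hc, hd, rfl⟩

lemma env_ge (hg : ∀ z, g z ≤ A + B * z) (x : ℝ) : g x ≤ concaveEnvelope g x :=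
  le_csInf (env_nonempty hg x) (by rintro v ⟨g', _, hd, rfl⟩; exact hd x)

lemma env_concave (hg : ∀ z, g z ≤ A + B * z) : ConcaveOn ℝ Set.univ (concaveEnvelope g) := by
  refine ⟨convex_univ, ?_⟩
  intro x _ y _ a b ha hb hab
  refine le_csInf (env_nonempty hg _) ?_
  rintro v ⟨g', hc, hd, rfl⟩
  have h1 : concaveEnvelope g x ≤ g' x := csInf_le (env_bddBelow g x) ⟨g', hc, hd, rfl⟩
  have h2 : concaveEnvelope g y ≤ g' y := csInf_le (env_bddBelow g y) ⟨g', hc, hd, rfl⟩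
  calc a • concaveEnvelope g x + b • concaveEnvelope g y
      ≤ a • g' x + b • g' y := by
        simp only [smul_eq_mul]
        gcongr
    _ ≤ g' (a • x + b • y) := hc.2 (Set.mem_univ x) (Set.mem_univ y) ha hb hab

/-- Key splitting lemma. -/
lemma env_two_point (hg : ∀ z, g z ≤ A + B * z) (x ε : ℝ) (hε : 0 < ε) :
    ∃ y₁ y₂ t : ℝ, 0 ≤ t ∧ t ≤ 1 ∧ t * y₁ + (1 - t) * y₂ = x ∧
      concaveEnvelope g x ≤ t * g y₁ + (1 - t) * g y₂ + ε := by
  by_contra hcon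
  push_neg at hcon
  set E := concaveEnvelope g with hE
  set v : ℝ := E x - ε with hv
  -- every admissible two-point combination is < E x, i.e. ≤ v
  have H : ∀ y₁ y₂ t : ℝ, 0 ≤ t → t ≤ 1 → t * y₁ + (1 - t) * y₂ = x →
      t * g y₁ + (1 - t) * g y₂ ≤ v := by
    intro y₁ y₂ t h0 h1 hb
    have := hcon y₁ y₂ t h0 h1 hb
    simp only [hv]; linarith
  have hgx : g x ≤ v := by
    have := H x 0 1 zero_le_one le_rfl (by ring)
    simpa using this
  -- chord inequality
  have chord : ∀ y₁ y₂ : ℝ, y₁ < x → x < y₂ →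
      (g y₂ - v) / (y₂ - x) ≤ (v - g y₁) / (x - y₁) := by
    intro y₁ y₂ h1 h2
    set t : ℝ := (y₂ - x) / (y₂ - y₁) with htdef
    have hden : 0 < y₂ - y₁ := by linarith
    have ht0 : 0 ≤ t := div_nonneg (by linarith) (by linarith)
    have ht1 : t ≤ 1 := by
      rw [htdef, div_le_one hden]; linarith
    have h1t : 1 - t = (x - y₁) / (y₂ - y₁) := by
      rw [htdef]
      field_simp
      ring
    have hbar : t * y₁ + (1 - t) * y₂ = x := by
      rw [htdef, h1t]; field_simp; ring
    have hcomb := H y₁ y₂ t ht0 ht1 hbar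
    rw [htdef, h1t] at hcomb
    rw [div_le_div_iff₀ (by linarith) (by linarith)]
    have hc2 : (y₂ - x) * g y₁ + (x - y₁) * g y₂ ≤ v * (y₂ - y₁) := by
      have := mul_le_mul_of_nonneg_right hcomb (le_of_lt hden)
      calc (y₂ - x) * g y₁ + (x - y₁) * g y₂
          = ((y₂ - x) / (y₂ - y₁) * g y₁ + (x - y₁) / (y₂ - y₁) * g y₂) * (y₂ - y₁) := by
            field_simp
        _ ≤ v * (y₂ - y₁) := this
    nlinarith
  -- the slope
  set Aset : Set ℝ := {s : ℝ | ∃ y : ℝ, x < y ∧ s = (g y - v) / (y - x)} with hAset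
  have hAne : Aset.Nonempty := ⟨(g (x+1) - v) / (x + 1 - x), x + 1, by linarith, rfl⟩
  have hAbdd : BddAbove Aset := by
    refine ⟨(v - g (x - 1)) / (x - (x - 1)), ?_⟩
    rintro s ⟨y, hy, rfl⟩
    exact chord (x - 1) y (by linarith) hy
  set m : ℝ := sSup Aset with hm
  have hup : ∀ y : ℝ, x < y → g y ≤ v + m * (y - x) := by
    intro y hy
    have : (g y - v) / (y - x) ≤ m := le_csSup hAbdd ⟨y, hy, rfl⟩
    have h' := mul_le_mul_of_nonneg_right this (le_of_lt (by linarith : (0:ℝ) < y - x))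
    rw [div_mul_cancel₀ _ (by intro hc; apply absurd hc; intro hc'; linarith [sub_eq_zero.mp hc'] : y - x ≠ 0)] at h'
    linarith
  have hdown : ∀ y : ℝ, y < x → g y ≤ v + m * (y - x) := by
    intro y hy
    have hub : m ≤ (v - g y) / (x - y) := by
      apply csSup_le hAne
      rintro s ⟨y₂, hy₂, rfl⟩
      exact chord y y₂ hy hy₂
    have h' := mul_le_mul_of_nonneg_right hub (le_of_lt (by linarith : (0:ℝ) < x - y))
    rw [div_mul_cancel₀ _ (by intro hc; apply absurd hc; intro hc'; linarith [sub_eq_zero.mp hc'] : x - y ≠ 0)] at h'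
    nlinarith
  -- the function min E ℓ is concave, dominates g, and is small at x
  set L : ℝ → ℝ := fun y => (v - m * x) + m * y with hL
  have hLconc : ConcaveOn ℝ Set.univ L := affine_concave _ _
  have hLdom : ∀ z, g z ≤ L z := by
    intro z
    rcases lt_trichotomy z x with hz | hz | hz
    · have := hdown z hz; simp only [hL]; linarith
    · subst hz; simp only [hL]; linarith [hgx]
    · have := hup z hz; simp only [hL]; linarith
  have hEconc : ConcaveOn ℝ Set.univ E := env_concave hg
  have hEdom : ∀ z, g z ≤ E z := fun z => env_ge hg z
  have hGconc : ConcaveOn ℝ Set.univ (E ⊓ L) := hEconc.inf hLconc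
  have hGdom : ∀ z, g z ≤ (E ⊓ L) z := fun z => le_min (hEdom z) (hLdom z)
  have : E x ≤ (E ⊓ L) x := env_le hg hGconc hGdom x
  have hLx : L x = v := by simp only [hL]; ring
  have : E x ≤ v := le_trans this (by rw [← hLx]; exact min_le_right _ _)
  simp only [hv] at this
  linarith

end env



def PathSpace : Type := ℕ → ℝ
instance : MeasurableSpace PathSpace := ⊤
instance : MeasurableSingletonClass PathSpace := ⟨fun _ => MeasurableSpace.measurableSet_top⟩

lemma path_measurableSet (s : Set PathSpace) : MeasurableSet s := MeasurableSpace.measurableSet_top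

lemma path_measurable {β} [MeasurableSpace β] (f : PathSpace → β) : Measurable f :=
  fun _ _ => MeasurableSpace.measurableSet_top

def constPath (x : ℝ) : PathSpace := fun _ => x

def prepend (k : ℕ) (x : ℝ) (p : PathSpace) : PathSpace := fun j => if j ≤ k then x else p j

noncomputable def goM (n : ℕ) (Y1 Y2 T : ℕ → ℝ → ℝ) : ℕ → ℝ → Measure PathSpace
  | k, x =>
    if h : k < n then
      ENNReal.ofReal (T (k+1) x) • ((goM n Y1 Y2 T (k+1) (Y1 (k+1) x)).map (prepend k x))
        + ENNReal.ofReal (1 - T (k+1) x) • ((goM n Y1 Y2 T (k+1) (Y2 (k+1) x)).map (prepend k x))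
    else Measure.dirac (constPath x)
  termination_by k x => n - k
  decreasing_by all_goals omega

noncomputable def reach (n : ℕ) (Y1 Y2 : ℕ → ℝ → ℝ) : ℕ → ℝ → ℕ → Finset ℝ
  | k, x, j =>
    if j ≤ k ∨ n ≤ k then {x}
    else reach n Y1 Y2 (k+1) (Y1 (k+1) x) j ∪ reach n Y1 Y2 (k+1) (Y2 (k+1) x) j
  termination_by k x j => n - k
  decreasing_by all_goals omega

example (p : PathSpace) (j : ℕ) : ℝ := p j

lemma goM_stop (n : ℕ) (Y1 Y2 T : ℕ → ℝ → ℝ) (k : ℕ) (x : ℝ) (h : ¬ k < n) :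
    goM n Y1 Y2 T k x = Measure.dirac (constPath x) := by
  rw [goM, dif_neg h]

lemma goM_succ (n : ℕ) (Y1 Y2 T : ℕ → ℝ → ℝ) (k : ℕ) (x : ℝ) (h : k < n) :
    goM n Y1 Y2 T k x =
      ENNReal.ofReal (T (k+1) x) • ((goM n Y1 Y2 T (k+1) (Y1 (k+1) x)).map (prepend k x))
        + ENNReal.ofReal (1 - T (k+1) x) • ((goM n Y1 Y2 T (k+1) (Y2 (k+1) x)).map (prepend k x)) := by
  rw [goM, dif_pos h]

lemma path_asm (f : PathSpace → ℝ) (μ : Measure PathSpace) : AEStronglyMeasurable f μ :=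
  ((path_measurable f).stronglyMeasurable).aestronglyMeasurable

lemma integrable_dirac_path (f : PathSpace → ℝ) (a : PathSpace) :
    Integrable f (Measure.dirac a) := by
  refine ⟨path_asm f _, ?_⟩
  rw [HasFiniteIntegral]
  rw [lintegral_dirac]
  exact ENNReal.coe_lt_top

section lemmas
variable (n : ℕ) (Y1 Y2 T : ℕ → ℝ → ℝ)

lemma integrable_goM : ∀ m k x, n - k ≤ m → ∀ f : PathSpace → ℝ,
    Integrable f (goM n Y1 Y2 T k x) := by
  intro m
  induction m with
  | zero =>
    intro k x hk f
    rw [goM_stop n Y1 Y2 T k x (by omega)]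
    exact integrable_dirac_path f _
  | succ m ih =>
    intro k x hk f
    by_cases h : k < n
    · rw [goM_succ n Y1 Y2 T k x h]
      have i1 : Integrable f ((goM n Y1 Y2 T (k+1) (Y1 (k+1) x)).map (prepend k x)) :=
        (integrable_map_measure (path_asm f _) (path_measurable _).aemeasurable).2
          (ih (k+1) (Y1 (k+1) x) (by omega) (f ∘ prepend k x))
      have i2 : Integrable f ((goM n Y1 Y2 T (k+1) (Y2 (k+1) x)).map (prepend k x)) :=
        (integrable_map_measure (path_asm f _) (path_measurable _).aemeasurable).2
          (ih (k+1) (Y2 (k+1) x) (by omega) (f ∘ prepend k x))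
      exact (i1.smul_measure ENNReal.ofReal_ne_top).add_measure
        (i2.smul_measure ENNReal.ofReal_ne_top)
    · rw [goM_stop n Y1 Y2 T k x h]
      exact integrable_dirac_path f _

lemma isProb_goM (hT : ∀ k x, 0 ≤ T k x ∧ T k x ≤ 1) :
    ∀ m k x, n - k ≤ m → IsProbabilityMeasure (goM n Y1 Y2 T k x) := by
  intro m
  induction m with
  | zero =>
    intro k x hk
    rw [goM_stop n Y1 Y2 T k x (by omega)]
    infer_instance
  | succ m ih =>
    intro k x hk
    by_cases h : k < n
    · rw [goM_succ n Y1 Y2 T k x h]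
      have p1 := ih (k+1) (Y1 (k+1) x) (by omega)
      have p2 := ih (k+1) (Y2 (k+1) x) (by omega)
      have m1 : IsProbabilityMeasure ((goM n Y1 Y2 T (k+1) (Y1 (k+1) x)).map (prepend k x)) :=
        MeasureTheory.Measure.isProbabilityMeasure_map (path_measurable _).aemeasurable
      have m2 : IsProbabilityMeasure ((goM n Y1 Y2 T (k+1) (Y2 (k+1) x)).map (prepend k x)) :=
        MeasureTheory.Measure.isProbabilityMeasure_map (path_measurable _).aemeasurable
      constructor
      rw [Measure.add_apply, Measure.smul_apply, Measure.smul_apply, m1.measure_univ,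
        m2.measure_univ]
      simp only [smul_eq_mul, mul_one]
      rw [← ENNReal.ofReal_add (hT (k+1) x).1 (by linarith [(hT (k+1) x).2])]
      norm_num
    · rw [goM_stop n Y1 Y2 T k x h]
      infer_instance

lemma ae_comb {μ1 μ2 : Measure PathSpace} {c1 c2 : ENNReal} {P : PathSpace → Prop}
    (h1 : ∀ᵐ ω ∂μ1, P ω) (h2 : ∀ᵐ ω ∂μ2, P ω) : ∀ᵐ ω ∂(c1 • μ1 + c2 • μ2), P ω := by
  rw [ae_add_measure_iff]
  exact ⟨(MeasureTheory.Measure.ae_smul_measure h1 c1), (MeasureTheory.Measure.ae_smul_measure h2 c2)⟩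

lemma ae_map_path {ν : Measure PathSpace} {g : PathSpace → PathSpace} {P : PathSpace → Prop}
    (h : ∀ᵐ ω ∂ν, P (g ω)) : ∀ᵐ ω ∂(ν.map g), P ω :=
  (ae_map_iff (path_measurable g).aemeasurable (path_measurableSet _)).2 h

lemma ae_coord_le : ∀ m k x, n - k ≤ m → ∀ j ≤ k, ∀ᵐ ω ∂goM n Y1 Y2 T k x, ω j = x := by
  intro m
  induction m with
  | zero =>
    intro k x hk j hj
    rw [goM_stop n Y1 Y2 T k x (by omega)]
    rw [ae_dirac_iff (path_measurableSet _)]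
    rfl
  | succ m ih =>
    intro k x hk j hj
    by_cases h : k < n
    · rw [goM_succ n Y1 Y2 T k x h]
      have : ∀ ω : PathSpace, prepend k x ω j = x := fun ω => if_pos hj
      exact ae_comb (ae_map_path (Filter.Eventually.of_forall fun ω => this ω))
        (ae_map_path (Filter.Eventually.of_forall fun ω => this ω))
    · rw [goM_stop n Y1 Y2 T k x h]
      rw [ae_dirac_iff (path_measurableSet _)]
      rfl

lemma ae_coord_tail : ∀ m k x, n - k ≤ m → ∀ j, n ≤ j →
    ∀ᵐ ω ∂goM n Y1 Y2 T k x, ω j = ω n := by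
  intro m
  induction m with
  | zero =>
    intro k x hk j hj
    rw [goM_stop n Y1 Y2 T k x (by omega)]
    rw [ae_dirac_iff (path_measurableSet _)]
    rfl
  | succ m ih =>
    intro k x hk j hj
    by_cases h : k < n
    · rw [goM_succ n Y1 Y2 T k x h]
      have key : ∀ y, (∀ᵐ ω ∂goM n Y1 Y2 T (k+1) y, (prepend k x ω) j = (prepend k x ω) n) := by
        intro y
        have e1 : ∀ ω : PathSpace, prepend k x ω j = ω j := fun ω => if_neg (by omega)
        have e2 : ∀ ω : PathSpace, prepend k x ω n = ω n := fun ω => if_neg (by omega)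
        filter_upwards [ih (k+1) y (by omega) j hj] with ω hω
        rw [e1, e2, hω]
      exact ae_comb (ae_map_path (key _)) (ae_map_path (key _))
    · rw [goM_stop n Y1 Y2 T k x h]
      rw [ae_dirac_iff (path_measurableSet _)]
      rfl

lemma ae_coord_reach : ∀ m k x, n - k ≤ m → ∀ j,
    ∀ᵐ ω ∂goM n Y1 Y2 T k x, ω j ∈ reach n Y1 Y2 k x j := by
  intro m
  induction m with
  | zero =>
    intro k x hk j
    rw [goM_stop n Y1 Y2 T k x (by omega), reach, if_pos (by omega : j ≤ k ∨ n ≤ k)]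
    rw [ae_dirac_iff (path_measurableSet _)]
    exact Finset.mem_singleton_self x
  | succ m ih =>
    intro k x hk j
    by_cases hjk : j ≤ k ∨ n ≤ k
    · rw [reach, if_pos hjk]
      rcases hjk with hjk | hjk
      · filter_upwards [ae_coord_le n Y1 Y2 T (m+1) k x hk j hjk] with ω hω
        rw [hω]; exact Finset.mem_singleton_self x
      · rw [goM_stop n Y1 Y2 T k x (by omega), ae_dirac_iff (path_measurableSet _)]
        exact Finset.mem_singleton_self x
    · push_neg at hjk
      have h : k < n := hjk.2
      have hj : k < j := hjk.1
      rw [reach, if_neg (by push_neg; omega)]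
      rw [goM_succ n Y1 Y2 T k x h]
      refine ae_comb (ae_map_path ?_) (ae_map_path ?_)
      · have e1 : ∀ ω : PathSpace, prepend k x ω j = ω j := fun ω => if_neg (by omega)
        filter_upwards [ih (k+1) (Y1 (k+1) x) (by omega) j] with ω hω
        rw [e1]
        exact Finset.mem_union_left _ hω
      · have e1 : ∀ ω : PathSpace, prepend k x ω j = ω j := fun ω => if_neg (by omega)
        filter_upwards [ih (k+1) (Y2 (k+1) x) (by omega) j] with ω hω
        rw [e1]
        exact Finset.mem_union_right _ hω

lemma card_reach : ∀ m k x j, n - k ≤ m → (reach n Y1 Y2 k x j).card ≤ 2 ^ (j - k) := by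
  intro m
  induction m with
  | zero =>
    intro k x j hk
    rw [reach, if_pos (by omega : j ≤ k ∨ n ≤ k)]
    simpa using Nat.one_le_two_pow
  | succ m ih =>
    intro k x j hk
    by_cases hjk : j ≤ k ∨ n ≤ k
    · rw [reach, if_pos hjk]
      simpa using Nat.one_le_two_pow
    · push_neg at hjk
      rw [reach, if_neg (by push_neg; omega)]
      calc (reach n Y1 Y2 (k+1) (Y1 (k+1) x) j ∪ reach n Y1 Y2 (k+1) (Y2 (k+1) x) j).card
          ≤ (reach n Y1 Y2 (k+1) (Y1 (k+1) x) j).card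
            + (reach n Y1 Y2 (k+1) (Y2 (k+1) x) j).card := Finset.card_union_le _ _
        _ ≤ 2 ^ (j - (k+1)) + 2 ^ (j - (k+1)) := by
            gcongr <;> exact ih (k+1) _ j (by omega)
        _ ≤ 2 ^ (j - k) := by
            have : j - k = (j - (k+1)) + 1 := by omega
            rw [this, pow_succ]
            omega

lemma integral_goM_succ (hT : ∀ k x, 0 ≤ T k x ∧ T k x ≤ 1) (k : ℕ) (x : ℝ) (h : k < n)
    (f : PathSpace → ℝ) :
    ∫ ω, f ω ∂goM n Y1 Y2 T k x
      = T (k+1) x * ∫ ω, f (prepend k x ω) ∂goM n Y1 Y2 T (k+1) (Y1 (k+1) x)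
        + (1 - T (k+1) x) * ∫ ω, f (prepend k x ω) ∂goM n Y1 Y2 T (k+1) (Y2 (k+1) x) := by
  have i1 : Integrable f ((goM n Y1 Y2 T (k+1) (Y1 (k+1) x)).map (prepend k x)) :=
    (integrable_map_measure (path_asm f _) (path_measurable _).aemeasurable).2
      (integrable_goM n Y1 Y2 T (n - (k+1)) (k+1) _ le_rfl (f ∘ prepend k x))
  have i2 : Integrable f ((goM n Y1 Y2 T (k+1) (Y2 (k+1) x)).map (prepend k x)) :=
    (integrable_map_measure (path_asm f _) (path_measurable _).aemeasurable).2
      (integrable_goM n Y1 Y2 T (n - (k+1)) (k+1) _ le_rfl (f ∘ prepend k x))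
  rw [goM_succ n Y1 Y2 T k x h,
    integral_add_measure (i1.smul_measure ENNReal.ofReal_ne_top)
      (i2.smul_measure ENNReal.ofReal_ne_top),
    integral_smul_measure, integral_smul_measure,
    ENNReal.toReal_ofReal (hT (k+1) x).1,
    ENNReal.toReal_ofReal (by linarith [(hT (k+1) x).1, (hT (k+1) x).2] : 0 ≤ 1 - T (k+1) x),
    integral_map (path_measurable _).aemeasurable (path_asm f _),
    integral_map (path_measurable _).aemeasurable (path_asm f _)]
  simp only [smul_eq_mul]

lemma integral_coord_const (hT : ∀ k x, 0 ≤ T k x ∧ T k x ≤ 1) (k : ℕ) (x : ℝ) (j : ℕ)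
    (hj : j ≤ k) (u : ℝ → ℝ) :
    ∫ ω, u (ω j) ∂goM n Y1 Y2 T k x = u x := by
  have hprob := isProb_goM n Y1 Y2 T hT (n - k) k x le_rfl
  have : ∫ ω, u (ω j) ∂goM n Y1 Y2 T k x = ∫ _ω, u x ∂goM n Y1 Y2 T k x := by
    apply integral_congr_ae
    filter_upwards [ae_coord_le n Y1 Y2 T (n - k) k x le_rfl j hj] with ω hω
    rw [hω]
  rw [this, integral_const, probReal_univ]
  simp

end lemmas

section main
variable (n : ℕ) (Y1 Y2 T : ℕ → ℝ → ℝ)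

lemma ae_prefix (k : ℕ) (x : ℝ) : ∀ᵐ ω ∂goM n Y1 Y2 T k x, ∀ j, j ≤ k → ω j = x := by
  rw [MeasureTheory.ae_all_iff]
  intro j
  by_cases hj : j ≤ k
  · filter_upwards [ae_coord_le n Y1 Y2 T (n-k) k x le_rfl j hj] with ω hω _
    exact hω
  · filter_upwards with ω hc
    exact absurd hc hj

lemma mart_goM (hT : ∀ k x, 0 ≤ T k x ∧ T k x ≤ 1)
    (hbar : ∀ k x, T k x * Y1 k x + (1 - T k x) * Y2 k x = x) :
    ∀ m k x, n - k ≤ m → ∀ (i : ℕ) (F : (Fin (i+1) → ℝ) → ℝ),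
    ∫ ω, F (fun q => ω q.1) * ω (i+1) ∂goM n Y1 Y2 T k x
      = ∫ ω, F (fun q => ω q.1) * ω i ∂goM n Y1 Y2 T k x := by
  intro m
  induction m with
  | zero =>
    intro k x hk i F
    rw [goM_stop n Y1 Y2 T k x (by omega), integral_dirac, integral_dirac]
    rfl
  | succ m ih =>
    intro k x hk i F
    by_cases h : k < n
    · rcases lt_trichotomy i k with hik | hik | hik
      · -- i < k : both coordinates are a.e. equal to x
        apply integral_congr_ae
        filter_upwards [ae_coord_le n Y1 Y2 T (n-k) k x le_rfl (i+1) (by omega),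
          ae_coord_le n Y1 Y2 T (n-k) k x le_rfl i (by omega)] with ω h1 h2
        rw [h1, h2]
      · -- i = k : the splitting step
        subst hik
        rw [integral_goM_succ n Y1 Y2 T hT i x h, integral_goM_succ n Y1 Y2 T hT i x h]
        have epre : ∀ (ω : PathSpace) (q : Fin (i+1)), prepend i x ω q.1 = x :=
          fun ω q => if_pos (by omega)
        have enext : ∀ ω : PathSpace, prepend i x ω (i+1) = ω (i+1) :=
          fun ω => if_neg (by omega)
        have e1 : ∀ y : ℝ, ∫ ω, F (fun q => prepend i x ω q.1) * (prepend i x ω (i+1))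
            ∂goM n Y1 Y2 T (i+1) y = F (fun _ => x) * y := by
          intro y
          have : (fun ω : PathSpace => F (fun q => prepend i x ω q.1) * (prepend i x ω (i+1)))
              = fun ω : PathSpace => (fun z => F (fun _ => x) * z) (ω (i+1)) := by
            funext ω
            simp only [enext ω]
            congr 1
            congr 1
            funext q
            exact epre ω q
          rw [this, integral_coord_const n Y1 Y2 T hT (i+1) y (i+1) le_rfl]
        have e2 : ∀ y : ℝ, ∫ ω, F (fun q => prepend i x ω q.1) * (prepend i x ω i)
            ∂goM n Y1 Y2 T (i+1) y = F (fun _ => x) * x := by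
          intro y
          have : (fun ω : PathSpace => F (fun q => prepend i x ω q.1) * (prepend i x ω i))
              = fun _ω : PathSpace => F (fun _ => x) * x := by
            funext ω
            have : prepend i x ω i = x := if_pos le_rfl
            rw [this]
            congr 1
            congr 1
            funext q
            exact epre ω q
          rw [this]
          have hprob := isProb_goM n Y1 Y2 T hT (n-(i+1)) (i+1) y le_rfl
          rw [integral_const, probReal_univ]
          simp
        rw [e1, e1, e2, e2]
        linear_combination (F fun _ => x) * hbar (i+1) x
      · -- i > k : recurse
        have enext : ∀ ω : PathSpace, prepend k x ω (i+1) = ω (i+1) :=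
          fun ω => if_neg (by omega)
        have ei : ∀ ω : PathSpace, prepend k x ω i = ω i := fun ω => if_neg (by omega)
        set F' : (Fin (i+1) → ℝ) → ℝ := fun g => F (fun q => if q.1 ≤ k then x else g q) with hF'
        have epre : ∀ ω : PathSpace,
            F (fun q => prepend k x ω q.1) = F' (fun q => ω q.1) := by
          intro ω
          rfl
        rw [integral_goM_succ n Y1 Y2 T hT k x h, integral_goM_succ n Y1 Y2 T hT k x h]
        have step : ∀ y : ℝ,
            ∫ ω, F (fun q => prepend k x ω q.1) * (prepend k x ω (i+1)) ∂goM n Y1 Y2 T (k+1) y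
              = ∫ ω, F (fun q => prepend k x ω q.1) * (prepend k x ω i) ∂goM n Y1 Y2 T (k+1) y := by
          intro y
          have l1 : (fun ω : PathSpace => F (fun q => prepend k x ω q.1) * (prepend k x ω (i+1)))
              = fun ω : PathSpace => F' (fun q => ω q.1) * ω (i+1) := by
            funext ω; rw [epre ω, enext ω]
          have l2 : (fun ω : PathSpace => F (fun q => prepend k x ω q.1) * (prepend k x ω i))
              = fun ω : PathSpace => F' (fun q => ω q.1) * ω i := by
            funext ω; rw [epre ω, ei ω]
          rw [l1, l2]
          exact ih (k+1) y (by omega) i F'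
        rw [step, step]
    · rw [goM_stop n Y1 Y2 T k x (by omega), integral_dirac, integral_dirac]
      rfl

lemma value_goM (hT : ∀ k x, 0 ≤ T k x ∧ T k x ≤ 1) (h : ℕ → ℝ → ℝ) (ψ : ℕ → ℝ → ℝ) (ε : ℝ)
    (hsel : ∀ k x, 1 ≤ k → k ≤ n →
      ψ k x ≤ T k x * (h k (Y1 k x) + ψ (k+1) (Y1 k x))
        + (1 - T k x) * (h k (Y2 k x) + ψ (k+1) (Y2 k x)) + ε)
    (hψtop : ∀ x, ψ (n+1) x = 0) :
    ∀ m k x, n - k ≤ m → k ≤ n →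
      ψ (k+1) x ≤ (∫ ω, ∑ j ∈ Finset.Icc (k+1) n, h j (ω j) ∂goM n Y1 Y2 T k x)
        + ((n - k : ℕ) : ℝ) * ε := by
  intro m
  induction m with
  | zero =>
    intro k x hk hkn
    have hk' : k = n := by omega
    subst hk'
    rw [Finset.Icc_eq_empty (by omega)]
    simp [hψtop x]
  | succ m ih =>
    intro k x hk hkn
    by_cases h' : k < n
    · have hT0 := (hT (k+1) x).1
      have hT1 := (hT (k+1) x).2
      rw [integral_goM_succ n Y1 Y2 T hT k x h']
      have branch : ∀ y : ℝ,
          ∫ ω, ∑ j ∈ Finset.Icc (k+1) n, h j (prepend k x ω j) ∂goM n Y1 Y2 T (k+1) y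
            = h (k+1) y + ∫ ω, ∑ j ∈ Finset.Icc (k+2) n, h j (ω j) ∂goM n Y1 Y2 T (k+1) y := by
        intro y
        have e : (fun ω : PathSpace => ∑ j ∈ Finset.Icc (k+1) n, h j (prepend k x ω j))
            = fun ω : PathSpace =>
              (fun z => h (k+1) z) (ω (k+1)) + ∑ j ∈ Finset.Icc (k+2) n, h j (ω j) := by
          funext ω
          have hsplit : Finset.Icc (k+1) n = insert (k+1) (Finset.Icc (k+2) n) := by
            ext a; simp only [Finset.mem_Icc, Finset.mem_insert]; omega
          rw [hsplit, Finset.sum_insert (by simp [Finset.mem_Icc])]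
          have hp : ∀ j, k+1 ≤ j → prepend k x ω j = ω j := fun j hj => if_neg (by omega)
          rw [hp (k+1) le_rfl]
          congr 1
          apply Finset.sum_congr rfl
          intro j hj
          rw [hp j (by have := (Finset.mem_Icc.mp hj).1; omega)]
        rw [e, integral_add (by
            exact (integrable_goM n Y1 Y2 T (n-(k+1)) (k+1) y le_rfl _))
          (integrable_goM n Y1 Y2 T (n-(k+1)) (k+1) y le_rfl _)]
        rw [integral_coord_const n Y1 Y2 T hT (k+1) y (k+1) le_rfl]
      rw [branch, branch]
      have ih1 := ih (k+1) (Y1 (k+1) x) (by omega) (by omega)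
      have ih2 := ih (k+1) (Y2 (k+1) x) (by omega) (by omega)
      have hs := hsel (k+1) x (by omega) (by omega)
      have hcast : ((n - k : ℕ) : ℝ) = ((n - (k+1) : ℕ) : ℝ) + 1 := by
        have : (n - k) = (n - (k+1)) + 1 := by omega
        rw [this]; push_cast; ring
      rw [hcast]
      have m1 := mul_le_mul_of_nonneg_left ih1 hT0
      have m2 := mul_le_mul_of_nonneg_left ih2 (by linarith : (0:ℝ) ≤ 1 - T (k+1) x)
      nlinarith [m1, m2, hs]
    · have hk' : k = n := by omega
      subst hk'
      rw [Finset.Icc_eq_empty (by omega)]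
      simp [hψtop x]

end main

/-- Strong-duality construction (`d = 0` case): with `φₙ★` the concave envelope of `hₙ` and
`φₖ★` the concave envelope of `hₖ + φₖ₊₁★`, for every `x₀` and `ε > 0` there is a martingale
`(X₀, …, Xₙ)` with `X₀ = x₀` a.s., each `Xₖ` taking at most `2ᵏ` values, such that
`φ₁★(x₀) ≤ E[∑_{k=1}^n hₖ(Xₖ)] + n ε`. -/
theorem iterated_concave_envelope_approx_martingale (n : ℕ) (hn : 1 ≤ n)
    (h : ℕ → ℝ → ℝ) (hcont : ∀ k, 1 ≤ k → k ≤ n → Continuous (h k))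
    (α β : ℕ → ℝ) (hb : ∀ k, 1 ≤ k → k ≤ n → ∀ x, h k x ≤ α k + β k * x)
    (φ : ℕ → ℝ → ℝ) (hφn : φ n = concaveEnvelope (h n))
    (hφk : ∀ k, 1 ≤ k → k < n → φ k = concaveEnvelope (fun y => h k y + φ (k + 1) y))
    (x₀ : ℝ) (ε : ℝ) (hε : 0 < ε) :
    ∃ M : MartingaleStartingAt x₀,
      (∀ k ≤ n, ∃ s : Finset ℝ, s.card ≤ 2 ^ k ∧ ∀ᵐ ω ∂M.μ, M.X k ω ∈ s) ∧
      φ 1 x₀ ≤ (∫ ω, ∑ k ∈ Finset.Icc 1 n, h k (M.X k ω) ∂M.μ) + n * ε := by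
  classical
  -- the modified potentials
  set ψ : ℕ → ℝ → ℝ := fun j x => if j ≤ n then φ j x else 0 with hψdef
  have hψtop : ∀ x, ψ (n+1) x = 0 := fun x => if_neg (by omega)
  have hφψ : ∀ k, 1 ≤ k → k ≤ n →
      φ k = concaveEnvelope (fun y => h k y + ψ (k+1) y) := by
    intro k h1 h2
    rcases eq_or_lt_of_le h2 with hk | hk
    · subst hk
      have e : (fun y => h k y + ψ (k+1) y) = h k := by
        funext y; rw [hψtop y]; ring
      rw [e]; exact hφn
    · have e : (fun y => h k y + ψ (k+1) y) = (fun y => h k y + φ (k+1) y) := by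
        funext y; simp only [hψdef, if_pos (by omega : k+1 ≤ n)]
      rw [e]; exact hφk k h1 hk
  -- affine upper bounds
  have bound : ∀ m k, n - k ≤ m → 1 ≤ k → k ≤ n →
      ∃ A B : ℝ, ∀ x, h k x + ψ (k+1) x ≤ A + B * x := by
    intro m
    induction m with
    | zero =>
      intro k hk h1 h2
      have : k = n := by omega
      subst this
      exact ⟨α k, β k, fun x => by rw [hψtop x]; simpa using hb k h1 h2 x⟩
    | succ m ih =>
      intro k hk h1 h2
      rcases eq_or_lt_of_le h2 with hkn | hkn
      · subst hkn
        exact ⟨α k, β k, fun x => by rw [hψtop x]; simpa using hb k h1 h2 x⟩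
      · obtain ⟨A, B, hAB⟩ := ih (k+1) (by omega) (by omega) (by omega)
        refine ⟨α k + A, β k + B, fun x => ?_⟩
        have hφ1 : φ (k+1) x ≤ A + B * x := by
          rw [hφψ (k+1) (by omega) (by omega)]
          exact env_le hAB (affine_concave A B) (fun z => hAB z) x
        have hψ1 : ψ (k+1) x ≤ A + B * x := by
          simp only [hψdef, if_pos (by omega : k+1 ≤ n)]
          exact hφ1
        have := hb k h1 h2 x
        nlinarith [this, hψ1]
  -- selection of splittings
  have main : ∀ k x, ∃ y1 y2 t : ℝ,
      (0 ≤ t ∧ t ≤ 1 ∧ t * y1 + (1 - t) * y2 = x) ∧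
      (1 ≤ k → k ≤ n →
        ψ k x ≤ t * (h k y1 + ψ (k+1) y1) + (1 - t) * (h k y2 + ψ (k+1) y2) + ε) := by
    intro k x
    by_cases hk : 1 ≤ k ∧ k ≤ n
    · obtain ⟨A, B, hAB⟩ := bound (n - k) k le_rfl hk.1 hk.2
      obtain ⟨y1, y2, t, h0, h1, hbar, hineq⟩ := env_two_point hAB x ε hε
      refine ⟨y1, y2, t, ⟨h0, h1, hbar⟩, fun _ _ => ?_⟩
      have e : ψ k x = concaveEnvelope (fun y => h k y + ψ (k+1) y) x := by
        simp only [hψdef, if_pos hk.2]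
        rw [hφψ k hk.1 hk.2]
      rw [e]
      exact hineq
    · exact ⟨x, x, 1/2, ⟨by norm_num, by norm_num, by ring⟩,
        fun ha hb' => absurd ⟨ha, hb'⟩ hk⟩
  choose Y1 Y2 T hprop hineq using main
  have hT : ∀ k x, 0 ≤ T k x ∧ T k x ≤ 1 := fun k x => ⟨(hprop k x).1, (hprop k x).2.1⟩
  have hbar : ∀ k x, T k x * Y1 k x + (1 - T k x) * Y2 k x = x := fun k x => (hprop k x).2.2
  -- the measure and filtration
  set μ : Measure PathSpace := goM n Y1 Y2 T 0 x₀ with hμdef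
  have hprob : IsProbabilityMeasure μ := isProb_goM n Y1 Y2 T hT n 0 x₀ (by omega)
  set Filt : Filtration ℕ (inferInstance : MeasurableSpace PathSpace) :=
    { seq := fun i => MeasurableSpace.comap (fun ω : PathSpace => fun q : Fin (i+1) => ω q.1) ⊤
      mono' := by
        intro i j hij s hs
        obtain ⟨t, -, rfl⟩ := hs
        refine ⟨(fun g : Fin (j+1) → ℝ => fun q : Fin (i+1) =>
          g (Fin.castLE (by omega) q)) ⁻¹' t, MeasurableSpace.measurableSet_top, rfl⟩
      le' := fun i => le_top } with hFdef
  have hXmeas : ∀ i, Measurable[Filt i] (fun ω : PathSpace => ω i) := by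
    intro i s hs
    exact ⟨(fun g : Fin (i+1) → ℝ => g ⟨i, by omega⟩) ⁻¹' s,
      MeasurableSpace.measurableSet_top, rfl⟩
  have hint : ∀ i, Integrable (fun ω : PathSpace => ω i) μ :=
    fun i => integrable_goM n Y1 Y2 T n 0 x₀ (by omega) _
  haveI : IsProbabilityMeasure μ := hprob
  haveI : IsFiniteMeasure μ := by infer_instance
  have hcond : ∀ i, (fun ω : PathSpace => ω i)
      =ᵐ[μ] μ[(fun ω : PathSpace => ω (i+1)) | Filt i] := by
    intro i
    haveI : SigmaFinite (μ.trim (Filt.le i)) := by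
      haveI : IsFiniteMeasure (μ.trim (Filt.le i)) := isFiniteMeasure_trim _
      infer_instance
    refine ae_eq_condExp_of_forall_setIntegral_eq (Filt.le i) (hint (i+1))
      (fun s _ _ => (hint i).integrableOn) ?_ ?_
    · rintro s ⟨t, -, rfl⟩ -
      set Fn : (Fin (i+1) → ℝ) → ℝ := fun g => if g ∈ t then (1:ℝ) else 0 with hFn
      have e1 : ∀ u : ℕ, ∫ ω in (fun ω : PathSpace => fun q : Fin (i+1) => ω q.1) ⁻¹' t,
          ω u ∂μ = ∫ ω, Fn (fun q : Fin (i+1) => ω q.1) * ω u ∂μ := by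
        intro u
        rw [← integral_indicator (path_measurableSet _)]
        apply integral_congr_ae
        filter_upwards with ω
        simp only [Set.indicator_apply, Set.mem_preimage, hFn]
        by_cases hω : (fun q : Fin (i+1) => ω q.1) ∈ t
        · simp [hω]
        · simp [hω]
      rw [e1 i, e1 (i+1)]
      exact (mart_goM n Y1 Y2 T hT hbar n 0 x₀ (by omega) i Fn).symm
    · exact StronglyMeasurable.aestronglyMeasurable ((hXmeas i).stronglyMeasurable)
  refine ⟨⟨PathSpace, inferInstance, μ, hprob, Filt, fun k ω => ω k, ?_, ?_⟩, ?_, ?_⟩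
  · exact martingale_nat (fun i => ((hXmeas i).stronglyMeasurable)) hint hcond
  · exact ae_coord_le n Y1 Y2 T n 0 x₀ (by omega) 0 le_rfl
  · intro k hk
    refine ⟨reach n Y1 Y2 0 x₀ k, ?_, ?_⟩
    · simpa using card_reach n Y1 Y2 n 0 x₀ k (by omega)
    · exact ae_coord_reach n Y1 Y2 T n 0 x₀ (by omega) k
  · have := value_goM n Y1 Y2 T hT h ψ ε
      (fun k x h1 h2 => hineq k x h1 h2) hψtop n 0 x₀ (by omega) (by omega)
    have e : ψ 1 x₀ = φ 1 x₀ := by simp only [hψdef, if_pos hn]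
    rw [e] at this
    simpa using this
end

section
/- Let f, g : ℝ → ℝ with g bounded above by an affine function, and suppose there exists a finitely-supported probability measure ℚ₀ on ℝ with barycenter x₀ such that ∫ g dℚ₀ > 0 (Slater's condition). Define p̄ = sup { ∫ f dμ : μ finitely-supported probability measure with barycenter x₀ and ∫ g dμ ≥ 0 } and d̄ = inf_{λ ≥ 0} sup { ∫ (f + λg) dμ : μ finitely-supported probability measure with barycenter x₀ }. If f is bounded above by an affine function, then p̄ = d̄. -/
open MeasureTheory

/-- A finitely-supported probability measure on `ℝ` with barycenter `x₀`. -/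
def IsFinSuppProbWithBarycenter (μ : Measure ℝ) (x₀ : ℝ) : Prop :=
  IsProbabilityMeasure μ ∧ (∃ s : Finset ℝ, μ ((↑s : Set ℝ)ᶜ) = 0) ∧ (∫ y, y ∂μ) = x₀

lemma fsp_integrable {μ : Measure ℝ} {x₀ : ℝ} (hμ : IsFinSuppProbWithBarycenter μ x₀)
    (h : ℝ → ℝ) : Integrable h μ := by
  classical
  obtain ⟨hp, ⟨s, hs⟩, -⟩ := hμ
  haveI := hp
  set h' : ℝ → ℝ := fun x => ∑ a ∈ s, Set.indicator {a} (fun _ => h a) x with hh'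
  have hint : Integrable h' μ :=
    integrable_finset_sum _ (fun a _ => (integrable_const (h a)).indicator (measurableSet_singleton a))
  refine hint.congr ?_
  have hsub : {x | h' x ≠ h x} ⊆ ((↑s : Set ℝ)ᶜ) := by
    intro x hx
    simp only [Set.mem_compl_iff, Finset.mem_coe]
    intro hxs
    apply hx
    simp only [hh', Set.indicator_apply, Set.mem_singleton_iff]
    rw [Finset.sum_ite_eq s x (fun a => h a)]
    simp [hxs]
  exact measure_mono_null hsub hs

lemma fsp_integral_le {μ : Measure ℝ} {x₀ : ℝ} (hμ : IsFinSuppProbWithBarycenter μ x₀)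
    {h : ℝ → ℝ} {α β : ℝ} (hb : ∀ x, h x ≤ α + β * x) : ∫ y, h y ∂μ ≤ α + β * x₀ := by
  haveI := hμ.1
  have hid : Integrable (fun y : ℝ => y) μ := fsp_integrable hμ _
  have h2 : Integrable (fun y : ℝ => α + β * y) μ := (integrable_const α).add (hid.const_mul β)
  calc ∫ y, h y ∂μ ≤ ∫ y, (α + β * y) ∂μ := integral_mono (fsp_integrable hμ h) h2 hb
    _ = α + β * x₀ := by
        rw [integral_add (integrable_const α) (hid.const_mul β), integral_const,
          MeasureTheory.integral_const_mul, hμ.2.2]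
        simp

lemma fsp_mix_integral {μ ν : Measure ℝ} {x₀ : ℝ} (hμ : IsFinSuppProbWithBarycenter μ x₀)
    (hν : IsFinSuppProbWithBarycenter ν x₀) {θ : ℝ} (h0 : 0 ≤ θ) (h1 : θ ≤ 1) (h : ℝ → ℝ) :
    ∫ y, h y ∂(ENNReal.ofReal θ • μ + ENNReal.ofReal (1 - θ) • ν)
      = θ * ∫ y, h y ∂μ + (1 - θ) * ∫ y, h y ∂ν := by
  have i1 : Integrable h (ENNReal.ofReal θ • μ) :=
    (fsp_integrable hμ h).smul_measure ENNReal.ofReal_ne_top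
  have i2 : Integrable h (ENNReal.ofReal (1 - θ) • ν) :=
    (fsp_integrable hν h).smul_measure ENNReal.ofReal_ne_top
  rw [integral_add_measure i1 i2, integral_smul_measure, integral_smul_measure,
    ENNReal.toReal_ofReal h0, ENNReal.toReal_ofReal (by linarith : (0:ℝ) ≤ 1 - θ)]
  simp [smul_eq_mul]

lemma fsp_mix {μ ν : Measure ℝ} {x₀ : ℝ} (hμ : IsFinSuppProbWithBarycenter μ x₀)
    (hν : IsFinSuppProbWithBarycenter ν x₀) {θ : ℝ} (h0 : 0 ≤ θ) (h1 : θ ≤ 1) :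
    IsFinSuppProbWithBarycenter (ENNReal.ofReal θ • μ + ENNReal.ofReal (1 - θ) • ν) x₀ := by
  obtain ⟨hp1, ⟨s, hs⟩, hb1⟩ := hμ
  obtain ⟨hp2, ⟨t, ht⟩, hb2⟩ := hν
  haveI := hp1; haveI := hp2
  refine ⟨⟨?_⟩, ⟨s ∪ t, ?_⟩, ?_⟩
  · simp only [Measure.add_apply, Measure.smul_apply, smul_eq_mul, measure_univ, mul_one]
    rw [← ENNReal.ofReal_add h0 (by linarith)]
    norm_num
  · simp only [Measure.add_apply, Measure.smul_apply, smul_eq_mul]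
    have e1 : μ ((↑(s ∪ t) : Set ℝ)ᶜ) = 0 := by
      refine measure_mono_null ?_ hs
      intro x hx hxs
      exact hx (by simpa using Or.inl hxs)
    have e2 : ν ((↑(s ∪ t) : Set ℝ)ᶜ) = 0 := by
      refine measure_mono_null ?_ ht
      intro x hx hxt
      exact hx (by simpa using Or.inr hxt)
    rw [e1, e2]; simp
  · rw [fsp_mix_integral ⟨hp1, ⟨s, hs⟩, hb1⟩ ⟨hp2, ⟨t, ht⟩, hb2⟩ h0 h1 (fun y => y), hb1, hb2]
    ring

/-- Lagrangian duality for a single expectation constraint: if `f` and `g` are bounded above by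
affine functions and Slater's condition holds (some finitely-supported probability measure with
barycenter `x₀` gives `∫ g > 0`), then the primal value
`p̄ = sup { ∫ f dμ : μ finitely supported, barycenter x₀, ∫ g dμ ≥ 0 }` equals the dual value
`d̄ = inf_{λ ≥ 0} sup { ∫ (f + λ g) dμ : μ finitely supported, barycenter x₀ }`. -/
theorem lagrangian_duality_single_constraint (f g : ℝ → ℝ) (αf βf αg βg : ℝ)
    (hf : ∀ x, f x ≤ αf + βf * x) (hg : ∀ x, g x ≤ αg + βg * x) (x₀ : ℝ)
    (slater : ∃ Q₀ : Measure ℝ, IsFinSuppProbWithBarycenter Q₀ x₀ ∧ 0 < ∫ y, g y ∂Q₀) :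
    sSup {r : ℝ | ∃ μ : Measure ℝ, IsFinSuppProbWithBarycenter μ x₀ ∧
        0 ≤ ∫ y, g y ∂μ ∧ r = ∫ y, f y ∂μ} =
    sInf {r : ℝ | ∃ l : ℝ, 0 ≤ l ∧
        r = sSup {v : ℝ | ∃ μ : Measure ℝ, IsFinSuppProbWithBarycenter μ x₀ ∧
          v = ∫ y, f y + l * g y ∂μ}} := by
  classical
  obtain ⟨Q₀, hQ₀, hQ₀g⟩ := slater
  set P : Set ℝ := {r : ℝ | ∃ μ : Measure ℝ, IsFinSuppProbWithBarycenter μ x₀ ∧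
      0 ≤ ∫ y, g y ∂μ ∧ r = ∫ y, f y ∂μ} with hPdef
  set S : ℝ → Set ℝ := fun l => {v : ℝ | ∃ μ : Measure ℝ, IsFinSuppProbWithBarycenter μ x₀ ∧
      v = ∫ y, f y + l * g y ∂μ} with hSdef
  set D : Set ℝ := {r : ℝ | ∃ l : ℝ, 0 ≤ l ∧ r = sSup (S l)} with hDdef
  show sSup P = sInf D
  -- basic facts
  have key : ∀ (μ : Measure ℝ), IsFinSuppProbWithBarycenter μ x₀ → ∀ l : ℝ,
      ∫ y, f y + l * g y ∂μ = (∫ y, f y ∂μ) + l * ∫ y, g y ∂μ := by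
    intro μ hμ l
    rw [integral_add (fsp_integrable hμ f) ((fsp_integrable hμ g).const_mul l),
      MeasureTheory.integral_const_mul]
  have hPne : (∫ y, f y ∂Q₀) ∈ P := ⟨Q₀, hQ₀, le_of_lt hQ₀g, rfl⟩
  have hPbdd : BddAbove P := by
    refine ⟨αf + βf * x₀, ?_⟩
    rintro r ⟨μ, hμ, -, rfl⟩
    exact fsp_integral_le hμ hf
  have hSne : ∀ l : ℝ, (∫ y, f y + l * g y ∂Q₀) ∈ S l := fun l => ⟨Q₀, hQ₀, rfl⟩
  have hSbdd : ∀ l : ℝ, 0 ≤ l → BddAbove (S l) := by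
    intro l hl
    refine ⟨(αf + l * αg) + (βf + l * βg) * x₀, ?_⟩
    rintro v ⟨μ, hμ, rfl⟩
    refine fsp_integral_le hμ (fun x => ?_)
    have := mul_le_mul_of_nonneg_left (hg x) hl
    have := hf x
    nlinarith
  set p : ℝ := sSup P with hp
  have weak : ∀ r ∈ D, p ≤ r := by
    rintro r ⟨l, hl, rfl⟩
    refine csSup_le ⟨_, hPne⟩ ?_
    rintro x ⟨μ, hμ, hgpos, rfl⟩
    have h1 : (∫ y, f y ∂μ) ≤ ∫ y, f y + l * g y ∂μ := by
      rw [key μ hμ l]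
      have := mul_nonneg hl hgpos
      linarith
    exact h1.trans (le_csSup (hSbdd l hl) ⟨μ, hμ, rfl⟩)
  have hDne : sSup (S 0) ∈ D := ⟨0, le_refl 0, rfl⟩
  have hDbdd : BddBelow D := ⟨p, weak⟩
  -- the slope set
  set C : Set ℝ := {c : ℝ | ∃ μ : Measure ℝ, IsFinSuppProbWithBarycenter μ x₀ ∧
      0 < ∫ y, g y ∂μ ∧ c = ((∫ y, f y ∂μ) - p) / (∫ y, g y ∂μ)} with hCdef
  have hCne : ((∫ y, f y ∂Q₀) - p) / (∫ y, g y ∂Q₀) ∈ C := ⟨Q₀, hQ₀, hQ₀g, rfl⟩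
  have hCub : ∀ c ∈ C, c ≤ 0 := by
    rintro c ⟨μ, hμ, hgpos, rfl⟩
    have hfle : (∫ y, f y ∂μ) ≤ p := le_csSup hPbdd ⟨μ, hμ, le_of_lt hgpos, rfl⟩
    exact div_nonpos_of_nonpos_of_nonneg (by linarith) (le_of_lt hgpos)
  have hCbdd : BddAbove C := ⟨0, hCub⟩
  set c : ℝ := sSup C with hc
  have hcle : c ≤ 0 := csSup_le ⟨_, hCne⟩ hCub
  -- key claim
  have claim : ∀ (μ : Measure ℝ), IsFinSuppProbWithBarycenter μ x₀ →
      (∫ y, f y ∂μ) - p ≤ c * ∫ y, g y ∂μ := by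
    intro μ hμ
    set a : ℝ := ∫ y, f y ∂μ with ha
    set b : ℝ := ∫ y, g y ∂μ with hb
    rcases lt_trichotomy b 0 with hbneg | hb0 | hbpos
    · -- b < 0 : concavity / slope argument
      have hcub2 : c ≤ (a - p) / b := by
        refine csSup_le ⟨_, hCne⟩ ?_
        rintro x ⟨ν, hν, hbν, rfl⟩
        set aν : ℝ := ∫ y, f y ∂ν with haν
        set bν : ℝ := ∫ y, g y ∂ν with hbν'
        set d : ℝ := bν - b with hd
        have hdpos : 0 < d := by simp only [hd]; linarith
        set θ : ℝ := bν / d with hθ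
        have h0 : 0 ≤ θ := le_of_lt (div_pos hbν hdpos)
        have h1 : θ ≤ 1 := (div_le_one hdpos).2 (by simp only [hd]; linarith)
        have h1θ : 1 - θ = -b / d := by
          field_simp [hθ, hd]
          rw [hθ, sub_mul, div_mul_cancel₀ _ (ne_of_gt hdpos), hd]; ring
        set ρ : Measure ℝ := ENNReal.ofReal θ • μ + ENNReal.ofReal (1 - θ) • ν with hρ
        have hρm : IsFinSuppProbWithBarycenter ρ x₀ := fsp_mix hμ hν h0 h1
        have hGρ : (∫ y, g y ∂ρ) = 0 := by
          rw [hρ, fsp_mix_integral hμ hν h0 h1 g, h1θ, ← hb, ← hbν', hθ]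
          field_simp
          ring
        have hFρ : (∫ y, f y ∂ρ) = θ * a + (1 - θ) * aν := by
          rw [hρ, fsp_mix_integral hμ hν h0 h1 f, ← ha, ← haν]
        have hfeas : (∫ y, f y ∂ρ) ≤ p := le_csSup hPbdd ⟨ρ, hρm, le_of_eq hGρ.symm, rfl⟩
        rw [hFρ, hθ, h1θ] at hfeas
        -- clear denominators
        have E2 : (bν / d * a + -b / d * aν) * d ≤ p * d :=
          mul_le_mul_of_nonneg_right hfeas (le_of_lt hdpos)
        have hdne : d ≠ 0 := ne_of_gt hdpos
        have E3 : bν * a + -b * aν ≤ p * d := by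
          field_simp at E2
          linarith
        have h3 : (aν - p) * (-b) ≤ (p - a) * bν := by
          simp only [hd] at E3
          nlinarith
        have e : (a - p) / b = (p - a) / (-b) := by
          rw [div_neg, ← neg_div]
          ring_nf
        rw [e, div_le_div_iff₀ hbν (by linarith : (0:ℝ) < -b)]
        exact h3
      have := mul_le_mul_of_nonpos_right hcub2 (le_of_lt hbneg)
      rw [div_mul_cancel₀ _ (ne_of_lt hbneg)] at this
      linarith
    · have hfle : a ≤ p := le_csSup hPbdd ⟨μ, hμ, le_of_eq hb0.symm, rfl⟩
      rw [hb0]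
      linarith
    · have h1 : (a - p) / b ≤ c := le_csSup hCbdd ⟨μ, hμ, hbpos, rfl⟩
      exact (div_le_iff₀ hbpos).1 h1
  -- strong duality
  have hstrong : sInf D ≤ p := by
    have hD : sSup (S (-c)) ≤ p := by
      refine csSup_le ⟨_, hSne (-c)⟩ ?_
      rintro v ⟨μ, hμ, rfl⟩
      rw [key μ hμ (-c)]
      have := claim μ hμ
      linarith
    exact le_trans (csInf_le hDbdd ⟨-c, by linarith, rfl⟩) hD
  exact le_antisymm (le_csInf ⟨_, hDne⟩ weak) hstrong
end
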